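/- arXiv:1602.08790 — 2 statements merged into one kernel-verified Lean document; each statement's English description precedes it below -/
import Mathlib

section
/- Let $p_1,p_2,q_1,q_2,r_1,r_2\in[1,\infty)$ with $1/p_j+1/q_j=1/r_j+1$ for $j=1,2$. Then for all nonnegative measurable $f,g:\mathbb{R}^2\to[0,\infty]$, $\left(\int_{\mathbb{R}}\left(\int_{\mathbb{R}}(f*g)(x_1,x_2)^{r_1}dx_1\right)^{r_2/r_1}dx_2\right)^{1/r_2}\le\left(\int_{\mathbb{R}}\left(\int_{\mathbb{R}}f^{p_1}dt_1\right)^{p_2/p_1}dt_2\right)^{1/p_2}\left(\int_{\mathbb{R}}\left(\int_{\mathbb{R}}g^{q_1}dt_1\right)^{q_2/q_1}dt_2\right)^{1/q_2}$, where $(f*g)(x)=\int_{\mathbb{R}^2}f(x-t)g(t)\,dt$. -/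
open MeasureTheory ENNReal Set

lemma enn_rpow_iSup {c : ℝ} (hc : 0 < c) (a : ℕ → ℝ≥0∞) :
    (⨆ n, a n) ^ c = ⨆ n, a n ^ c := by
  have := OrderIso.map_iSup (ENNReal.orderIsoRpow c hc) a
  simpa only [ENNReal.orderIsoRpow_apply] using this

lemma enn_iSup_min_nat (a : ℝ≥0∞) : (⨆ n : ℕ, a ⊓ (n : ℝ≥0∞)) = a := by
  rw [← inf_iSup_eq]
  simp [ENNReal.iSup_natCast]

lemma minkowski_aux {α β : Type*} [MeasurableSpace α] [MeasurableSpace β]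
    (μ : Measure α) (ν : Measure β) [SFinite μ] [SFinite ν]
    {p : ℝ} (hp : 1 < p) (F : α × β → ℝ≥0∞) (hF : Measurable F)
    (hA : (∫⁻ x, (∫⁻ y, F (x, y) ∂ν) ^ p ∂μ) ≠ ⊤) :
    (∫⁻ x, (∫⁻ y, F (x, y) ∂ν) ^ p ∂μ) ^ (1 / p)
      ≤ ∫⁻ y, (∫⁻ x, F (x, y) ^ p ∂μ) ^ (1 / p) ∂ν := by
  have hp0 : (0:ℝ) < p := lt_trans one_pos hp
  set G : α → ℝ≥0∞ := fun x => ∫⁻ y, F (x, y) ∂ν with hGdef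
  have hG : Measurable G := hF.lintegral_prod_right'
  set A := ∫⁻ x, G x ^ p ∂μ with hAdef
  set B := ∫⁻ y, (∫⁻ x, F (x, y) ^ p ∂μ) ^ (1 / p) ∂ν with hBdef
  have hpq : p.HolderConjugate (p / (p - 1)) := Real.HolderConjugate.conjExponent hp
  set q : ℝ := p / (p - 1) with hqdef
  have hpq1 : (p - 1) * q = p := by
    rw [hqdef, mul_comm, div_mul_cancel₀ _ (by linarith : p - 1 ≠ 0)]
  have hB : Measurable fun y => (∫⁻ x, F (x, y) ^ p ∂μ) ^ (1 / p) :=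
    ((hF.pow_const p).lintegral_prod_left').pow_const _
  have key : A ≤ B * A ^ (1 / q) := by
    have step1 : A = ∫⁻ x, ∫⁻ y, F (x, y) * G x ^ (p - 1) ∂ν ∂μ := by
      apply lintegral_congr
      intro x
      rw [lintegral_mul_const (f := fun y => F (x, y)) _ (hF.comp measurable_prodMk_left)]
      show G x ^ p = G x * G x ^ (p - 1)
      nth_rewrite 2 [← ENNReal.rpow_one (G x)]
      rw [← ENNReal.rpow_add_of_nonneg _ _ zero_le_one (by linarith)]
      ring_nf
    have step2 : (∫⁻ x, ∫⁻ y, F (x, y) * G x ^ (p - 1) ∂ν ∂μ)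
        = ∫⁻ y, ∫⁻ x, F (x, y) * G x ^ (p - 1) ∂μ ∂ν :=
      lintegral_lintegral_swap ((hF.mul ((hG.comp measurable_fst).pow_const _)).aemeasurable)
    have step3 : ∀ y : β, (∫⁻ x, F (x, y) * G x ^ (p - 1) ∂μ)
        ≤ (∫⁻ x, F (x, y) ^ p ∂μ) ^ (1 / p) * A ^ (1 / q) := by
      intro y
      calc (∫⁻ x, F (x, y) * G x ^ (p - 1) ∂μ)
          = ∫⁻ x, ((fun x => F (x, y)) * fun x => G x ^ (p - 1)) x ∂μ := rfl
        _ ≤ (∫⁻ x, F (x, y) ^ p ∂μ) ^ (1 / p) * (∫⁻ x, (G x ^ (p - 1)) ^ q ∂μ) ^ (1 / q) :=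
            ENNReal.lintegral_mul_le_Lp_mul_Lq μ hpq
              (hF.comp (measurable_id.prodMk measurable_const)).aemeasurable
              (hG.pow_const (p - 1)).aemeasurable
        _ = (∫⁻ x, F (x, y) ^ p ∂μ) ^ (1 / p) * A ^ (1 / q) := by
            congr 2
            apply lintegral_congr
            intro x
            rw [← ENNReal.rpow_mul, hpq1]
    calc A = ∫⁻ y, ∫⁻ x, F (x, y) * G x ^ (p - 1) ∂μ ∂ν := by rw [step1, step2]
      _ ≤ ∫⁻ y, (∫⁻ x, F (x, y) ^ p ∂μ) ^ (1 / p) * A ^ (1 / q) ∂ν :=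
          lintegral_mono step3
      _ = B * A ^ (1 / q) := lintegral_mul_const _ hB
  rcases eq_or_ne A 0 with hA0 | hA0
  · rw [hA0, ENNReal.zero_rpow_of_pos (by positivity)]
    exact zero_le
  · have hAq0 : A ^ (1 / q) ≠ 0 := by
      intro h
      rw [ENNReal.rpow_eq_zero_iff] at h
      rcases h with ⟨h, _⟩ | ⟨h, _⟩
      exacts [hA0 h, hA h]
    have hAqt : A ^ (1 / q) ≠ ⊤ :=
      ENNReal.rpow_ne_top_of_nonneg (one_div_nonneg.mpr hpq.symm.nonneg) hA
    rw [show (1:ℝ)/p = 1 - 1/q by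
      have := hpq.inv_add_inv_eq_one; rw [one_div, one_div]; linarith]
    rw [ENNReal.rpow_sub _ _ hA0 hA, ENNReal.rpow_one]
    exact ENNReal.div_le_of_le_mul' (by rwa [mul_comm] at key)

lemma minkowski_lintegral {α β : Type*} [MeasurableSpace α] [MeasurableSpace β]
    (μ : Measure α) (ν : Measure β) [SigmaFinite μ] [SigmaFinite ν]
    {p : ℝ} (hp : 1 ≤ p) (F : α × β → ℝ≥0∞) (hF : Measurable F) :
    (∫⁻ x, (∫⁻ y, F (x, y) ∂ν) ^ p ∂μ) ^ (1 / p)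
      ≤ ∫⁻ y, (∫⁻ x, F (x, y) ^ p ∂μ) ^ (1 / p) ∂ν := by
  rcases hp.eq_or_lt with rfl | hp1
  · rw [show (1:ℝ)/1 = 1 by norm_num]
    simp_rw [ENNReal.rpow_one]
    exact (lintegral_lintegral_swap (μ := μ) (ν := ν) (f := fun x y => F (x, y))
      (by exact hF.aemeasurable)).le
  have hp0 : (0:ℝ) < p := lt_trans one_pos hp1
  set S : ℕ → Set α := spanningSets μ with hSdef
  set T : ℕ → Set β := spanningSets ν with hTdef
  set Fn : ℕ → α × β → ℝ≥0∞ :=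
    fun n z => (S n ×ˢ T n).indicator (fun w => F w ⊓ (n : ℝ≥0∞)) z with hFndef
  have hFn : ∀ n, Measurable (Fn n) := fun n =>
    (hF.inf measurable_const).indicator
      ((measurableSet_spanningSets μ n).prod (measurableSet_spanningSets ν n))
  have hFnmono : Monotone Fn := by
    intro m n hmn z
    simp only [hFndef]
    by_cases hz : z ∈ S m ×ˢ T m
    · rw [Set.indicator_of_mem hz, Set.indicator_of_mem
        (Set.prod_mono (monotone_spanningSets μ hmn) (monotone_spanningSets ν hmn) hz)]
      exact inf_le_inf_left _ (Nat.cast_le.mpr hmn)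
    · rw [Set.indicator_of_notMem hz]; exact zero_le
  have hFnle : ∀ n z, Fn n z ≤ F z := by
    intro n z
    simp only [hFndef]
    by_cases hz : z ∈ S n ×ˢ T n
    · rw [Set.indicator_of_mem hz]; exact inf_le_left
    · rw [Set.indicator_of_notMem hz]; exact zero_le
  have hFnle' : ∀ n z, Fn n z ≤ (n : ℝ≥0∞) := by
    intro n z
    simp only [hFndef]
    by_cases hz : z ∈ S n ×ˢ T n
    · rw [Set.indicator_of_mem hz]; exact inf_le_right
    · rw [Set.indicator_of_notMem hz]; exact zero_le
  have hFnsup : ∀ z, (⨆ n, Fn n z) = F z := by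
    intro z
    refine le_antisymm (iSup_le fun n => hFnle n z) ?_
    obtain ⟨n1, hn1⟩ : ∃ n, z.1 ∈ S n := by
      have : z.1 ∈ ⋃ n, S n := by rw [hSdef, iUnion_spanningSets]; trivial
      exact Set.mem_iUnion.mp this
    obtain ⟨n2, hn2⟩ : ∃ n, z.2 ∈ T n := by
      have : z.2 ∈ ⋃ n, T n := by rw [hTdef, iUnion_spanningSets]; trivial
      exact Set.mem_iUnion.mp this
    have hmem : ∀ k : ℕ, z ∈ S (max (max n1 n2) k) ×ˢ T (max (max n1 n2) k) := fun k =>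
      ⟨monotone_spanningSets μ (le_trans (le_max_left _ _) (le_max_left _ _)) hn1,
       monotone_spanningSets ν (le_trans (le_max_right _ _) (le_max_left _ _)) hn2⟩
    calc F z = ⨆ k : ℕ, F z ⊓ (k : ℝ≥0∞) := (enn_iSup_min_nat _).symm
      _ ≤ ⨆ n, Fn n z := by
          refine iSup_le fun k => le_iSup_of_le (max (max n1 n2) k) ?_
          simp only [hFndef]
          rw [Set.indicator_of_mem (hmem k)]
          exact inf_le_inf_left _ (Nat.cast_le.mpr (le_max_right _ _))
  -- the inner integrals converge monotonically
  have hGsup : ∀ x, (∫⁻ y, F (x, y) ∂ν) = ⨆ n, ∫⁻ y, Fn n (x, y) ∂ν := by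
    intro x
    calc (∫⁻ y, F (x, y) ∂ν) = ∫⁻ y, ⨆ n, Fn n (x, y) ∂ν :=
          lintegral_congr fun y => (hFnsup (x, y)).symm
      _ = ⨆ n, ∫⁻ y, Fn n (x, y) ∂ν :=
          lintegral_iSup (fun n => by exact (hFn n).comp measurable_prodMk_left)
            (fun m n hmn y => hFnmono hmn (x, y))
  have hAsup : (∫⁻ x, (∫⁻ y, F (x, y) ∂ν) ^ p ∂μ)
      = ⨆ n, ∫⁻ x, (∫⁻ y, Fn n (x, y) ∂ν) ^ p ∂μ := by
    calc (∫⁻ x, (∫⁻ y, F (x, y) ∂ν) ^ p ∂μ)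
        = ∫⁻ x, ⨆ n, (∫⁻ y, Fn n (x, y) ∂ν) ^ p ∂μ :=
          lintegral_congr fun x => by rw [hGsup x, enn_rpow_iSup hp0]
      _ = ⨆ n, ∫⁻ x, (∫⁻ y, Fn n (x, y) ∂ν) ^ p ∂μ :=
          lintegral_iSup
            (fun n => by exact ((hFn n).lintegral_prod_right').pow_const _)
            (fun m n hmn x => ENNReal.rpow_le_rpow
              (lintegral_mono fun y => hFnmono hmn (x, y)) hp0.le)
  have hAn_fin : ∀ n, (∫⁻ x, (∫⁻ y, Fn n (x, y) ∂ν) ^ p ∂μ) ≠ ⊤ := by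
    intro n
    have hb : ∀ x, (∫⁻ y, Fn n (x, y) ∂ν) ^ p
        ≤ (S n).indicator (fun _ => ((n : ℝ≥0∞) * ν (T n)) ^ p) x := by
      intro x
      by_cases hx : x ∈ S n
      · rw [Set.indicator_of_mem hx]
        refine ENNReal.rpow_le_rpow ?_ hp0.le
        calc (∫⁻ y, Fn n (x, y) ∂ν)
            ≤ ∫⁻ y, (T n).indicator (fun _ => (n : ℝ≥0∞)) y ∂ν := by
              refine lintegral_mono fun y => ?_
              by_cases hy : y ∈ T n
              · rw [Set.indicator_of_mem hy]
                exact hFnle' n (x, y)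
              · have hz : (x, y) ∉ S n ×ˢ T n := fun h => hy h.2
                rw [Set.indicator_of_notMem hy]
                simp only [hFndef]
                rw [Set.indicator_of_notMem hz]
          _ = (n : ℝ≥0∞) * ν (T n) := by
              rw [lintegral_indicator_const (measurableSet_spanningSets ν n)]
      · rw [Set.indicator_of_notMem hx]
        have h0 : (∫⁻ y, Fn n (x, y) ∂ν) = 0 := by
          have hz : ∀ y, Fn n (x, y) = 0 := fun y => by
            have : (x, y) ∉ S n ×ˢ T n := fun h => hx h.1
            simp only [hFndef]
            rw [Set.indicator_of_notMem this]
          simp [hz]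
        rw [h0, ENNReal.zero_rpow_of_pos hp0]
    refine ne_top_of_le_ne_top ?_ (lintegral_mono hb)
    rw [lintegral_indicator_const (measurableSet_spanningSets μ n)]
    exact ENNReal.mul_ne_top
      (ENNReal.rpow_ne_top_of_nonneg hp0.le
        (ENNReal.mul_ne_top (ENNReal.natCast_ne_top n) (measure_spanningSets_lt_top ν n).ne))
      (measure_spanningSets_lt_top μ n).ne
  rw [hAsup, enn_rpow_iSup (by positivity : (0:ℝ) < 1 / p)]
  refine iSup_le fun n => ?_
  refine (minkowski_aux μ ν hp1 (Fn n) (hFn n) (hAn_fin n)).trans ?_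
  exact lintegral_mono fun y => ENNReal.rpow_le_rpow
    (lintegral_mono fun x => ENNReal.rpow_le_rpow (hFnle n (x, y)) hp0.le) (by positivity)


lemma holder3 {α : Type*} [MeasurableSpace α] (μ : Measure α)
    {a b c : α → ℝ≥0∞} (ha : AEMeasurable a μ) (hb : AEMeasurable b μ) (hc : AEMeasurable c μ)
    {x y z : ℝ} (hx : 0 ≤ x) (hy : 0 ≤ y) (hz : 0 ≤ z) (hsum : x + y + z = 1) :
    ∫⁻ t, a t ^ x * b t ^ y * c t ^ z ∂μ ≤
      (∫⁻ t, a t ∂μ) ^ x * (∫⁻ t, b t ∂μ) ^ y * (∫⁻ t, c t ∂μ) ^ z := by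
  have := ENNReal.lintegral_prod_norm_pow_le (μ := μ) (Finset.univ : Finset (Fin 3))
    (f := ![a, b, c]) (p := ![x, y, z]) ?_ ?_ ?_
  · simpa [Fin.prod_univ_three, mul_assoc] using this
  · intro i _; fin_cases i <;> assumption
  · simp [Fin.sum_univ_three]; linarith
  · intro i _; fin_cases i <;> assumption

lemma young_one_dim (p q r : ℝ)
    (hp : 1 ≤ p) (hq : 1 ≤ q) (hr : 1 ≤ r) (h : 1 / p + 1 / q = 1 / r + 1)
    (f g : ℝ → ℝ≥0∞) (hf : Measurable f) (hg : Measurable g) :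
    (∫⁻ x : ℝ, (∫⁻ t : ℝ, f (x - t) * g t) ^ r) ^ (1 / r)
      ≤ (∫⁻ t : ℝ, f t ^ p) ^ (1 / p) * (∫⁻ t : ℝ, g t ^ q) ^ (1 / q) := by
  have hp0 : (0:ℝ) < p := lt_of_lt_of_le one_pos hp
  have hq0 : (0:ℝ) < q := lt_of_lt_of_le one_pos hq
  have hr0 : (0:ℝ) < r := lt_of_lt_of_le one_pos hr
  set Fp := ∫⁻ t : ℝ, f t ^ p with hFp
  set Gq := ∫⁻ t : ℝ, g t ^ q with hGq
  set x' : ℝ := 1 / r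
  set y' : ℝ := 1 / p - 1 / r
  set z' : ℝ := 1 / q - 1 / r
  have hy' : 0 ≤ y' := by
    have : 1 / q ≤ 1 := by
      rw [div_le_one hq0]; exact hq
    simp only [y', sub_nonneg]; linarith
  have hz' : 0 ≤ z' := by
    have : 1 / p ≤ 1 := by
      rw [div_le_one hp0]; exact hp
    simp only [z', sub_nonneg]; linarith
  have hx' : 0 ≤ x' := by positivity
  have hsum : x' + y' + z' = 1 := by simp only [x', y', z']; linarith
  -- translation invariance
  have htrans : ∀ x : ℝ, (∫⁻ t : ℝ, f (x - t) ^ p) = Fp := by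
    intro x
    exact (Measure.measurePreserving_sub_left volume x).lintegral_comp (hf.pow_const p)
  -- pointwise bound for each x
  have key : ∀ x : ℝ, (∫⁻ t : ℝ, f (x - t) * g t) ≤
      (∫⁻ t : ℝ, f (x - t) ^ p * g t ^ q) ^ x' * Fp ^ y' * Gq ^ z' := by
    intro x
    have hmf : Measurable fun t : ℝ => f (x - t) :=
      hf.comp (measurable_const.sub measurable_id)
    have heq : ∀ t : ℝ, f (x - t) * g t =
        (f (x - t) ^ p * g t ^ q) ^ x' * (f (x - t) ^ p) ^ y' * (g t ^ q) ^ z' := by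
      intro t
      rw [ENNReal.mul_rpow_of_nonneg _ _ hx']
      have hre : (f (x - t) ^ p) ^ x' * (g t ^ q) ^ x' * (f (x - t) ^ p) ^ y' * (g t ^ q) ^ z'
          = ((f (x - t) ^ p) ^ x' * (f (x - t) ^ p) ^ y')
            * ((g t ^ q) ^ x' * (g t ^ q) ^ z') := by ring
      rw [hre, ← ENNReal.rpow_add_of_nonneg _ _ hx' hy', ← ENNReal.rpow_add_of_nonneg _ _ hx' hz',
        ← ENNReal.rpow_mul, ← ENNReal.rpow_mul]
      have e1 : p * (x' + y') = 1 := by simp only [x', y']; field_simp; ring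
      have e2 : q * (x' + z') = 1 := by simp only [x', z']; field_simp; ring
      rw [e1, e2, ENNReal.rpow_one, ENNReal.rpow_one]
    calc (∫⁻ t : ℝ, f (x - t) * g t)
        = ∫⁻ t : ℝ, (f (x - t) ^ p * g t ^ q) ^ x' * (f (x - t) ^ p) ^ y' * (g t ^ q) ^ z' := by
          simp_rw [heq]
      _ ≤ (∫⁻ t : ℝ, f (x - t) ^ p * g t ^ q) ^ x' * (∫⁻ t : ℝ, f (x - t) ^ p) ^ y'
            * (∫⁻ t : ℝ, g t ^ q) ^ z' :=
          holder3 volume ((hmf.pow_const p).mul (hg.pow_const q)).aemeasurable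
            (hmf.pow_const p).aemeasurable (hg.pow_const q).aemeasurable hx' hy' hz' hsum
      _ = (∫⁻ t : ℝ, f (x - t) ^ p * g t ^ q) ^ x' * Fp ^ y' * Gq ^ z' := by
          rw [htrans x]
  -- measurability of the inner integral
  have hI : Measurable (fun x : ℝ => ∫⁻ t : ℝ, f (x - t) ^ p * g t ^ q) := by
    apply Measurable.lintegral_prod_right'
      (f := fun z : ℝ × ℝ => f (z.1 - z.2) ^ p * g z.2 ^ q)
    exact ((hf.comp (measurable_fst.sub measurable_snd)).pow_const p).mul
      ((hg.comp measurable_snd).pow_const q)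
  -- Fubini
  have hFub : (∫⁻ x : ℝ, ∫⁻ t : ℝ, f (x - t) ^ p * g t ^ q) = Fp * Gq := by
    rw [lintegral_lintegral_swap
      (((hf.comp (measurable_fst.sub measurable_snd)).pow_const p).mul
        ((hg.comp measurable_snd).pow_const q)).aemeasurable]
    have : ∀ t : ℝ, (∫⁻ x : ℝ, f (x - t) ^ p * g t ^ q) = Fp * g t ^ q := by
      intro t
      rw [lintegral_mul_const _ (Measurable.pow_const (fun s hs => by
        exact (hf.comp (measurable_sub_const t)) hs) p)]
      congr 1
      exact (measurePreserving_sub_right volume t).lintegral_comp (hf.pow_const p)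
    simp_rw [this]
    rw [lintegral_const_mul _ (hg.pow_const q), ← hGq, mul_comm]
  -- integrate the r-th power of the key bound
  have key2 : (∫⁻ x : ℝ, (∫⁻ t : ℝ, f (x - t) * g t) ^ r)
      ≤ Fp ^ (r / p) * Gq ^ (r / q) := by
    calc (∫⁻ x : ℝ, (∫⁻ t : ℝ, f (x - t) * g t) ^ r)
        ≤ ∫⁻ x : ℝ, Fp ^ (y' * r) * Gq ^ (z' * r) * (∫⁻ t : ℝ, f (x - t) ^ p * g t ^ q) := by
          apply lintegral_mono
          intro x
          have := ENNReal.rpow_le_rpow (key x) hr0.le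
          refine this.trans_eq ?_
          rw [ENNReal.mul_rpow_of_nonneg _ _ hr0.le, ENNReal.mul_rpow_of_nonneg _ _ hr0.le,
            ← ENNReal.rpow_mul, ← ENNReal.rpow_mul, ← ENNReal.rpow_mul]
          have : x' * r = 1 := by simp only [x']; field_simp
          rw [this, ENNReal.rpow_one]
          ring
      _ = Fp ^ (y' * r) * Gq ^ (z' * r) * (Fp * Gq) := by
          rw [lintegral_const_mul _ hI, hFub]
      _ = Fp ^ (r / p) * Gq ^ (r / q) := by
          have e1 : r / p = y' * r + 1 := by simp only [y']; field_simp; ring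
          have e2 : r / q = z' * r + 1 := by simp only [z']; field_simp; ring
          rw [e1, e2, ENNReal.rpow_add_of_nonneg _ _ (by positivity) zero_le_one,
            ENNReal.rpow_add_of_nonneg _ _ (by positivity) zero_le_one,
            ENNReal.rpow_one, ENNReal.rpow_one]
          ring
  calc (∫⁻ x : ℝ, (∫⁻ t : ℝ, f (x - t) * g t) ^ r) ^ (1 / r)
      ≤ (Fp ^ (r / p) * Gq ^ (r / q)) ^ (1 / r) := ENNReal.rpow_le_rpow key2 (by positivity)
    _ = Fp ^ (1 / p) * Gq ^ (1 / q) := by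
        rw [ENNReal.mul_rpow_of_nonneg _ _ (by positivity), ← ENNReal.rpow_mul,
          ← ENNReal.rpow_mul]
        congr 1 <;> congr 1 <;> field_simp <;> ring

/-- The two-variable mixed-norm Young inequality for convolution on `ℝ²`. -/
theorem mixed_norm_young_two_variables
    (p1 p2 q1 q2 r1 r2 : ℝ)
    (hp1 : 1 ≤ p1) (hp2 : 1 ≤ p2) (hq1 : 1 ≤ q1) (hq2 : 1 ≤ q2)
    (hr1 : 1 ≤ r1) (hr2 : 1 ≤ r2)
    (h1 : 1 / p1 + 1 / q1 = 1 / r1 + 1) (h2 : 1 / p2 + 1 / q2 = 1 / r2 + 1)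
    (f g : ℝ × ℝ → ℝ≥0∞) (hf : Measurable f) (hg : Measurable g) :
    (∫⁻ x2 : ℝ, (∫⁻ x1 : ℝ,
        (∫⁻ t : ℝ × ℝ, f ((x1, x2) - t) * g t) ^ r1) ^ (r2 / r1)) ^ (1 / r2)
      ≤ (∫⁻ t2 : ℝ, (∫⁻ t1 : ℝ, f (t1, t2) ^ p1) ^ (p2 / p1)) ^ (1 / p2)
        * (∫⁻ t2 : ℝ, (∫⁻ t1 : ℝ, g (t1, t2) ^ q1) ^ (q2 / q1)) ^ (1 / q2) := by
  have hp10 : (0:ℝ) < p1 := lt_of_lt_of_le one_pos hp1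
  have hq10 : (0:ℝ) < q1 := lt_of_lt_of_le one_pos hq1
  have hr10 : (0:ℝ) < r1 := lt_of_lt_of_le one_pos hr1
  have hr20 : (0:ℝ) < r2 := lt_of_lt_of_le one_pos hr2
  set Φ : ℝ → ℝ≥0∞ := fun s => (∫⁻ t1 : ℝ, f (t1, s) ^ p1) ^ (1 / p1) with hΦdef
  set Ψ : ℝ → ℝ≥0∞ := fun s => (∫⁻ t1 : ℝ, g (t1, s) ^ q1) ^ (1 / q1) with hΨdef
  have hΦ : Measurable Φ := by
    apply Measurable.pow_const
    exact Measurable.lintegral_prod_right'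
      (f := fun w : ℝ × ℝ => f (w.2, w.1) ^ p1) ((hf.comp measurable_swap).pow_const p1)
  have hΨ : Measurable Ψ := by
    apply Measurable.pow_const
    exact Measurable.lintegral_prod_right'
      (f := fun w : ℝ × ℝ => g (w.2, w.1) ^ q1) ((hg.comp measurable_swap).pow_const q1)
  -- rewrite the 2D convolution as an iterated integral
  have conv_eq : ∀ x1 x2 : ℝ, (∫⁻ t : ℝ × ℝ, f ((x1, x2) - t) * g t)
      = ∫⁻ t2 : ℝ, ∫⁻ t1 : ℝ, f (x1 - t1, x2 - t2) * g (t1, t2) := by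
    intro x1 x2
    rw [MeasureTheory.Measure.volume_eq_prod, lintegral_prod_symm
      (fun t : ℝ × ℝ => f ((x1, x2) - t) * g t)
      (((hf.comp (by fun_prop : Measurable fun t : ℝ × ℝ => (x1, x2) - t)).mul
        hg).aemeasurable)]
    simp [Prod.mk_sub_mk]
  have step12 : ∀ x2 : ℝ, (∫⁻ x1 : ℝ,
      (∫⁻ t : ℝ × ℝ, f ((x1, x2) - t) * g t) ^ r1) ^ (1 / r1)
      ≤ ∫⁻ t2 : ℝ, Φ (x2 - t2) * Ψ t2 := by
    intro x2
    have hFmeas : Measurable (fun z : ℝ × ℝ =>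
        ∫⁻ t1 : ℝ, f (z.1 - t1, x2 - z.2) * g (t1, z.2)) := by
      apply Measurable.lintegral_prod_right'
        (f := fun w : (ℝ × ℝ) × ℝ => f (w.1.1 - w.2, x2 - w.1.2) * g (w.2, w.1.2))
      exact (hf.comp ((measurable_fst.fst.sub measurable_snd).prodMk
          (measurable_const.sub measurable_fst.snd))).mul
        (hg.comp (measurable_snd.prodMk measurable_fst.snd))
    calc (∫⁻ x1 : ℝ, (∫⁻ t : ℝ × ℝ, f ((x1, x2) - t) * g t) ^ r1) ^ (1 / r1)
        = (∫⁻ x1 : ℝ,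
            (∫⁻ t2 : ℝ, ∫⁻ t1 : ℝ, f (x1 - t1, x2 - t2) * g (t1, t2)) ^ r1) ^ (1 / r1) := by
          congr 1
          exact lintegral_congr fun x1 => by rw [conv_eq x1 x2]
      _ ≤ ∫⁻ t2 : ℝ, (∫⁻ x1 : ℝ,
            (∫⁻ t1 : ℝ, f (x1 - t1, x2 - t2) * g (t1, t2)) ^ r1) ^ (1 / r1) :=
          minkowski_lintegral volume volume hr1 _ hFmeas
      _ ≤ ∫⁻ t2 : ℝ, Φ (x2 - t2) * Ψ t2 := by
          refine lintegral_mono fun t2 => ?_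
          exact young_one_dim p1 q1 r1 hp1 hq1 hr1 h1
            (fun u => f (u, x2 - t2)) (fun u => g (u, t2))
            (by exact hf.comp (measurable_id.prodMk measurable_const))
            (by exact hg.comp (measurable_id.prodMk measurable_const))
  calc (∫⁻ x2 : ℝ, (∫⁻ x1 : ℝ,
        (∫⁻ t : ℝ × ℝ, f ((x1, x2) - t) * g t) ^ r1) ^ (r2 / r1)) ^ (1 / r2)
      = (∫⁻ x2 : ℝ, ((∫⁻ x1 : ℝ,
          (∫⁻ t : ℝ × ℝ, f ((x1, x2) - t) * g t) ^ r1) ^ (1 / r1)) ^ r2) ^ (1 / r2) := by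
        congr 1
        refine lintegral_congr fun x2 => ?_
        rw [← ENNReal.rpow_mul]
        congr 1
        field_simp
    _ ≤ (∫⁻ x2 : ℝ, (∫⁻ t2 : ℝ, Φ (x2 - t2) * Ψ t2) ^ r2) ^ (1 / r2) :=
        ENNReal.rpow_le_rpow (lintegral_mono fun x2 =>
          ENNReal.rpow_le_rpow (step12 x2) hr20.le) (by positivity)
    _ ≤ (∫⁻ s : ℝ, Φ s ^ p2) ^ (1 / p2) * (∫⁻ s : ℝ, Ψ s ^ q2) ^ (1 / q2) :=
        young_one_dim p2 q2 r2 hp2 hq2 hr2 h2 Φ Ψ hΦ hΨ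
    _ = (∫⁻ t2 : ℝ, (∫⁻ t1 : ℝ, f (t1, t2) ^ p1) ^ (p2 / p1)) ^ (1 / p2)
        * (∫⁻ t2 : ℝ, (∫⁻ t1 : ℝ, g (t1, t2) ^ q1) ^ (q2 / q1)) ^ (1 / q2) := by
        congr 1
        · congr 1
          refine lintegral_congr fun s => ?_
          rw [hΦdef]
          simp only
          rw [← ENNReal.rpow_mul]
          congr 1
          field_simp
        · congr 1
          refine lintegral_congr fun s => ?_
          rw [hΨdef]
          simp only
          rw [← ENNReal.rpow_mul]
          congr 1
          field_simp
end

section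
/- Suppose a product operator $K$ on $(0,\infty)^2$ with kernels $k_1,k_2$ has factor operators $K_1,K_2$ bounded as $\|K_jg\|_{L^{r_j}}\le C_j\|g\|_{L^{p_j}}$ (nonnegative $g$), and suppose $r_1\ge 1$, $r_2\ge 1$, $r_1\le r_2$ and $p_2\le p_1$. Then both chains hold: $\|Kf\|_{L^{(r_1,r_2)}}\le C_1C_2\|f\|_{L^{(p_2,p_1)}}\le C_1C_2\|f\|_{L^{(p_1,p_2)}}$ and $\|Kf\|_{L^{(r_1,r_2)}}\le\|Kf\|_{L^{(r_2,r_1)}}\le C_1C_2\|f\|_{L^{(p_1,p_2)}}$, for nonnegative measurable $f$. -/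
open MeasureTheory ENNReal Set Function Filter

section Aux

lemma ennreal_rpow_iSup {f : ℕ → ℝ≥0∞} (hf : Monotone f) {q : ℝ} (hq : 0 ≤ q) :
    (⨆ n, f n) ^ q = ⨆ n, f n ^ q := by
  have h1 : Filter.Tendsto f atTop (nhds (⨆ n, f n)) := tendsto_atTop_iSup hf
  have h2 : Filter.Tendsto (fun n => f n ^ q) atTop (nhds ((⨆ n, f n) ^ q)) :=
    (ENNReal.continuous_rpow_const.tendsto _).comp h1
  have h3 : Filter.Tendsto (fun n => f n ^ q) atTop (nhds (⨆ n, f n ^ q)) :=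
    tendsto_atTop_iSup (fun a b hab => ENNReal.rpow_le_rpow (hf hab) hq)
  exact tendsto_nhds_unique h2 h3

lemma ennreal_iSup_min_nat {a : ℝ≥0∞} : ⨆ n : ℕ, min a (n : ℝ≥0∞) = a := by
  apply le_antisymm (iSup_le fun n => min_le_left _ _)
  rcases eq_or_ne a ∞ with h | h
  · subst h
    calc (∞ : ℝ≥0∞) = ⨆ n : ℕ, (n : ℝ≥0∞) := ENNReal.iSup_natCast.symm
      _ ≤ _ := iSup_mono fun n => by simp
  · obtain ⟨n, hn⟩ := ENNReal.exists_nat_gt h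
    exact le_trans (min_eq_left hn.le).symm.le (le_iSup (fun n : ℕ => min a (n : ℝ≥0∞)) n)

lemma Measurable.ennrpow_const {γ : Type*} [MeasurableSpace γ] {h : γ → ℝ≥0∞}
    (hh : Measurable h) (c : ℝ) : Measurable fun a => h a ^ c :=
  ENNReal.continuous_rpow_const.measurable.comp hh

variable {α β : Type*} [MeasurableSpace α] [MeasurableSpace β]

/-- **Minkowski's integral inequality** for `ℝ≥0∞`-valued functions. -/
lemma lintegral_minkowski (μ : Measure α) (ν : Measure β) [SigmaFinite μ] [SigmaFinite ν]
    {g : α → β → ℝ≥0∞} (hg : Measurable (Function.uncurry g)) {q : ℝ} (hq : 1 ≤ q) :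
    (∫⁻ y, (∫⁻ x, g x y ∂μ) ^ q ∂ν) ^ (1 / q)
      ≤ ∫⁻ x, (∫⁻ y, g x y ^ q ∂ν) ^ (1 / q) ∂μ := by
  have hgswap : Measurable (Function.uncurry fun y x => g x y) := hg.comp measurable_swap
  rcases eq_or_lt_of_le hq with hq1 | hq1
  · subst hq1
    simp only [ENNReal.rpow_one, one_div_one]
    exact le_of_eq (lintegral_lintegral_swap hgswap.aemeasurable)
  -- now 1 < q
  set q' := Real.conjExponent q with hq'def
  have hqq' : q.HolderConjugate q' := Real.HolderConjugate.conjExponent hq1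
  have hq0 : (0:ℝ) < q := hqq'.pos
  have hgx : ∀ y, Measurable fun x => g x y := fun y => hg.comp (measurable_id.prodMk measurable_const)
  have hgy : ∀ x, Measurable fun y => g x y := fun x => hg.comp (measurable_const.prodMk measurable_id)
  set F : β → ℝ≥0∞ := fun y => ∫⁻ x, g x y ∂μ with hFdef
  have hF : Measurable F := Measurable.lintegral_prod_left hg
  set A : ℝ≥0∞ := ∫⁻ x, (∫⁻ y, g x y ^ q ∂ν) ^ (1 / q) ∂μ with hAdef
  set s : ℕ → Set α := spanningSets μ with hsdef
  set t : ℕ → Set β := spanningSets ν with htdef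
  set Fn : ℕ → β → ℝ≥0∞ := fun n y => ∫⁻ x in s n, min (g x y) n ∂μ with hFndef
  have hFnmeas : ∀ n, Measurable (Fn n) := fun n =>
    Measurable.lintegral_prod_left (hg.min measurable_const)
  have hFnle : ∀ n y, Fn n y ≤ F y := fun n y =>
    le_trans (lintegral_mono fun x => min_le_left _ _)
      (lintegral_mono' Measure.restrict_le_self le_rfl)
  have hFnbdd : ∀ n y, Fn n y ≤ (n : ℝ≥0∞) * μ (s n) := by
    intro n y
    calc Fn n y ≤ ∫⁻ _ in s n, (n : ℝ≥0∞) ∂μ := lintegral_mono fun x => min_le_right _ _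
      _ = (n : ℝ≥0∞) * μ (s n) := by rw [setLIntegral_const]
  have hFnmono : ∀ y, Monotone fun n => Fn n y := by
    intro y m n hmn
    exact lintegral_mono' (Measure.restrict_mono (monotone_spanningSets μ hmn) le_rfl)
      (fun x => min_le_min le_rfl (by exact_mod_cast Nat.cast_le.2 hmn))
  have hFniSup : ∀ y, (⨆ n, Fn n y) = F y := by
    intro y
    have heq : ∀ n, Fn n y = ∫⁻ x, (s n).indicator (fun x => min (g x y) n) x ∂μ := by
      intro n
      rw [lintegral_indicator (measurableSet_spanningSets μ n)]
    simp_rw [heq]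
    rw [← lintegral_iSup]
    · congr 1
      ext x
      obtain ⟨N, hN⟩ : ∃ N, x ∈ s N := by
        have hx : x ∈ ⋃ n, s n := by rw [hsdef, iUnion_spanningSets μ]; trivial
        exact mem_iUnion.mp hx
      apply le_antisymm
      · apply iSup_le
        intro n
        refine le_trans (indicator_le_self _ _ _) (min_le_left _ _)
      · conv_lhs => rw [← ennreal_iSup_min_nat (a := g x y)]
        apply iSup_le
        intro m
        refine le_trans ?_ (le_iSup _ (max m N))
        rw [indicator_of_mem (monotone_spanningSets μ (le_max_right m N) hN)]
        exact min_le_min le_rfl (by exact_mod_cast Nat.cast_le.2 (le_max_left m N))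
    · intro n
      exact ((hg.comp (measurable_id.prodMk measurable_const)).min measurable_const).indicator
        (measurableSet_spanningSets μ n)
    · intro m n hmn x
      dsimp only
      by_cases hx : x ∈ s m
      · rw [indicator_of_mem hx, indicator_of_mem (monotone_spanningSets μ hmn hx)]
        exact min_le_min le_rfl (by exact_mod_cast Nat.cast_le.2 hmn)
      · rw [indicator_of_notMem hx]
        exact zero_le
  set In : ℕ → ℝ≥0∞ := fun n => ∫⁻ y in t n, Fn n y ^ q ∂ν with hIndef
  have hInlt : ∀ n, In n < ∞ := by
    intro n
    calc In n ≤ ∫⁻ _ in t n, ((n : ℝ≥0∞) * μ (s n)) ^ q ∂ν :=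
          lintegral_mono fun y => ENNReal.rpow_le_rpow (hFnbdd n y) hq0.le
      _ = ((n : ℝ≥0∞) * μ (s n)) ^ q * ν (t n) := setLIntegral_const _ _
      _ < ∞ := by
          apply ENNReal.mul_lt_top
          · exact ENNReal.rpow_lt_top_of_nonneg hq0.le
              (ENNReal.mul_ne_top (ENNReal.natCast_ne_top n) (measure_spanningSets_lt_top μ n).ne)
          · exact measure_spanningSets_lt_top ν n
  have hkey : ∀ n, In n ≤ A * In n ^ (1 / q') := by
    intro n
    have step1 : In n ≤ ∫⁻ y in t n, F y * Fn n y ^ (q - 1) ∂ν := by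
      apply lintegral_mono
      intro y
      show Fn n y ^ q ≤ F y * Fn n y ^ (q - 1)
      have : Fn n y ^ q = Fn n y * Fn n y ^ (q - 1) := by
        nth_rewrite 1 [show q = 1 + (q - 1) by ring]
        rw [ENNReal.rpow_add_of_nonneg _ _ zero_le_one (by linarith), ENNReal.rpow_one]
      rw [this]
      exact mul_le_mul_left (hFnle n y) _
    have step2 : ∫⁻ y in t n, F y * Fn n y ^ (q - 1) ∂ν
        = ∫⁻ x, ∫⁻ y in t n, g x y * Fn n y ^ (q - 1) ∂ν ∂μ := by
      have : ∀ y, F y * Fn n y ^ (q - 1) = ∫⁻ x, g x y * Fn n y ^ (q - 1) ∂μ := by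
        intro y
        exact (lintegral_mul_const _ (hgx y)).symm
      simp_rw [this]
      exact lintegral_lintegral_swap
        ((hg.comp measurable_swap).mul
          (((hFnmeas n).comp measurable_fst).ennrpow_const (q - 1))).aemeasurable
    have step3 : ∀ x, ∫⁻ y in t n, g x y * Fn n y ^ (q - 1) ∂ν
        ≤ (∫⁻ y, g x y ^ q ∂ν) ^ (1 / q) * In n ^ (1 / q') := by
      intro x
      have hold := ENNReal.lintegral_mul_le_Lp_mul_Lq (ν.restrict (t n)) hqq'
        (hgy x).aemeasurable ((hFnmeas n).ennrpow_const (q - 1)).aemeasurable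
      simp only [Pi.mul_apply] at hold
      refine le_trans hold (mul_le_mul' ?_ ?_)
      · exact ENNReal.rpow_le_rpow (lintegral_mono' Measure.restrict_le_self le_rfl)
          (by positivity)
      · apply le_of_eq
        congr 1
        refine lintegral_congr fun y => ?_
        rw [← ENNReal.rpow_mul, hqq'.sub_one_mul_conj]
    calc In n ≤ ∫⁻ x, ∫⁻ y in t n, g x y * Fn n y ^ (q - 1) ∂ν ∂μ := step1.trans step2.le
      _ ≤ ∫⁻ x, (∫⁻ y, g x y ^ q ∂ν) ^ (1 / q) * In n ^ (1 / q') ∂μ := lintegral_mono step3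
      _ = A * In n ^ (1 / q') := by
          rw [lintegral_mul_const]
          exact (Measurable.lintegral_prod_right (f := fun x y => g x y ^ q)
            (hg.ennrpow_const q)).ennrpow_const (1 / q)
  have hIq : ∀ n, In n ^ (1 / q) ≤ A := by
    intro n
    by_cases h0 : In n = 0
    · rw [h0, ENNReal.zero_rpow_of_pos hqq'.one_div_pos]
      exact zero_le
    · have hsum : 1 / q + 1 / q' = 1 := by
        rw [one_div, one_div]; exact hqq'.inv_add_inv_eq_one
      have hsplit : In n = In n ^ (1 / q) * In n ^ (1 / q') := by
        rw [← ENNReal.rpow_add _ _ h0 (hInlt n).ne, hsum, ENNReal.rpow_one]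
      have hc0 : In n ^ (1 / q') ≠ 0 :=
        (ENNReal.rpow_pos (pos_iff_ne_zero.2 h0) (hInlt n).ne).ne'
      have hctop : In n ^ (1 / q') ≠ ∞ :=
        ENNReal.rpow_ne_top_of_nonneg hqq'.symm.one_div_nonneg (hInlt n).ne
      have := hkey n
      nth_rewrite 1 [hsplit] at this
      exact (ENNReal.mul_le_mul_iff_left hc0 hctop).1 this
  have hAq : ∫⁻ y, F y ^ q ∂ν ≤ A ^ q := by
    have h1 : ∀ n, In n ≤ A ^ q := by
      intro n
      calc In n = (In n ^ (1 / q)) ^ q := by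
            rw [← ENNReal.rpow_mul, one_div, inv_mul_cancel₀ hq0.ne', ENNReal.rpow_one]
        _ ≤ A ^ q := ENNReal.rpow_le_rpow (hIq n) hq0.le
    set φ : ℕ → β → ℝ≥0∞ := fun n y => (t n).indicator (fun y => Fn n y ^ q) y with hφdef
    have hφmeas : ∀ n, Measurable (φ n) :=
      fun n => ((hFnmeas n).ennrpow_const q).indicator (measurableSet_spanningSets ν n)
    have hφmono : Monotone φ := by
      intro m n hmn y
      show (t m).indicator (fun y => Fn m y ^ q) y ≤ (t n).indicator (fun y => Fn n y ^ q) y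
      by_cases hy : y ∈ t m
      · rw [indicator_of_mem hy, indicator_of_mem (monotone_spanningSets ν hmn hy)]
        exact ENNReal.rpow_le_rpow (hFnmono y hmn) hq0.le
      · rw [indicator_of_notMem hy]; exact zero_le
    have hφint : ∀ n, ∫⁻ y, φ n y ∂ν = In n := fun n =>
      lintegral_indicator (measurableSet_spanningSets ν n) (fun y => Fn n y ^ q)
    have hpt : ∀ y, F y ^ q ≤ ⨆ n, φ n y := by
      intro y
      obtain ⟨N, hN⟩ : ∃ N, y ∈ t N := by
        have hy : y ∈ ⋃ n, t n := by rw [htdef, iUnion_spanningSets ν]; trivial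
        exact mem_iUnion.mp hy
      rw [← hFniSup y, ennreal_rpow_iSup (hFnmono y) hq0.le]
      apply iSup_le
      intro m
      refine le_trans ?_ (le_iSup _ (max m N))
      show Fn m y ^ q ≤ (t (max m N)).indicator (fun y => Fn (max m N) y ^ q) y
      rw [indicator_of_mem (monotone_spanningSets ν (le_max_right m N) hN)]
      exact ENNReal.rpow_le_rpow (hFnmono y (le_max_left m N)) hq0.le
    calc ∫⁻ y, F y ^ q ∂ν ≤ ∫⁻ y, ⨆ n, φ n y ∂ν := lintegral_mono hpt
      _ = ⨆ n, ∫⁻ y, φ n y ∂ν := lintegral_iSup hφmeas hφmono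
      _ = ⨆ n, In n := by simp_rw [hφint]
      _ ≤ A ^ q := iSup_le h1
  calc (∫⁻ y, (∫⁻ x, g x y ∂μ) ^ q ∂ν) ^ (1 / q) ≤ (A ^ q) ^ (1 / q) :=
        ENNReal.rpow_le_rpow hAq (by positivity)
    _ = A := by rw [← ENNReal.rpow_mul, mul_one_div_cancel hq0.ne', ENNReal.rpow_one]


/-- Generalized Minkowski: permuting a mixed norm, putting the smaller exponent inside,
decreases it. -/
lemma lintegral_minkowski_rpow (μ : Measure α) (ν : Measure β) [SigmaFinite μ] [SigmaFinite ν]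
    {g : α → β → ℝ≥0∞} (hg : Measurable (Function.uncurry g)) {a b : ℝ}
    (ha : 0 < a) (hab : a ≤ b) :
    (∫⁻ y, (∫⁻ x, g x y ^ a ∂μ) ^ (b / a) ∂ν) ^ (1 / b)
      ≤ (∫⁻ x, (∫⁻ y, g x y ^ b ∂ν) ^ (a / b) ∂μ) ^ (1 / a) := by
  have hb : 0 < b := lt_of_lt_of_le ha hab
  have hq : 1 ≤ b / a := (one_le_div ha).2 hab
  have h := lintegral_minkowski μ ν (g := fun x y => g x y ^ a) (hg.ennrpow_const a) hq
  have e1 : (1 : ℝ) / (b / a) = a / b := one_div_div b a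
  rw [e1] at h
  have e2 : ∀ x y, (g x y ^ a) ^ (b / a) = g x y ^ b := by
    intro x y
    rw [← ENNReal.rpow_mul]
    congr 1
    field_simp
  simp_rw [e2] at h
  calc (∫⁻ y, (∫⁻ x, g x y ^ a ∂μ) ^ (b / a) ∂ν) ^ (1 / b)
      = ((∫⁻ y, (∫⁻ x, g x y ^ a ∂μ) ^ (b / a) ∂ν) ^ (a / b)) ^ (1 / a) := by
        rw [← ENNReal.rpow_mul]
        congr 1
        field_simp
    _ ≤ _ := ENNReal.rpow_le_rpow h (by positivity)

end Aux

/-- For a product operator on `(0,∞)²` with `1 ≤ r₁ ≤ r₂` and `p₂ ≤ p₁`, the permuted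
mixed norm inequality refines the unpermuted one in two different ways. -/
theorem product_operator_two_refinements
    (k1 k2 : ℝ → ℝ → ℝ≥0∞)
    (hk1 : Measurable fun p : ℝ × ℝ => k1 p.1 p.2)
    (hk2 : Measurable fun p : ℝ × ℝ => k2 p.1 p.2)
    (p1 p2 r1 r2 : ℝ) (C1 C2 : ℝ≥0∞)
    (hp2 : 0 < p2) (hp21 : p2 ≤ p1) (hr1 : 1 ≤ r1) (hr2 : 1 ≤ r2) (hr12 : r1 ≤ r2)
    (hK1 : ∀ g : ℝ → ℝ≥0∞, Measurable g →
      (∫⁻ x in Ioi (0 : ℝ), (∫⁻ t in Ioi (0 : ℝ), k1 x t * g t) ^ r1) ^ (1 / r1)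
        ≤ C1 * (∫⁻ t in Ioi (0 : ℝ), g t ^ p1) ^ (1 / p1))
    (hK2 : ∀ g : ℝ → ℝ≥0∞, Measurable g →
      (∫⁻ x in Ioi (0 : ℝ), (∫⁻ t in Ioi (0 : ℝ), k2 x t * g t) ^ r2) ^ (1 / r2)
        ≤ C2 * (∫⁻ t in Ioi (0 : ℝ), g t ^ p2) ^ (1 / p2))
    (f : ℝ × ℝ → ℝ≥0∞) (hf : Measurable f) :
    ((∫⁻ x2 in Ioi (0 : ℝ), (∫⁻ x1 in Ioi (0 : ℝ),
          (∫⁻ t2 in Ioi (0 : ℝ), ∫⁻ t1 in Ioi (0 : ℝ),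
              k1 x1 t1 * k2 x2 t2 * f (t1, t2)) ^ r1) ^ (r2 / r1)) ^ (1 / r2)
        ≤ C1 * C2 * (∫⁻ t1 in Ioi (0 : ℝ),
            (∫⁻ t2 in Ioi (0 : ℝ), f (t1, t2) ^ p2) ^ (p1 / p2)) ^ (1 / p1)
      ∧ C1 * C2 * (∫⁻ t1 in Ioi (0 : ℝ),
            (∫⁻ t2 in Ioi (0 : ℝ), f (t1, t2) ^ p2) ^ (p1 / p2)) ^ (1 / p1)
        ≤ C1 * C2 * (∫⁻ t2 in Ioi (0 : ℝ),
            (∫⁻ t1 in Ioi (0 : ℝ), f (t1, t2) ^ p1) ^ (p2 / p1)) ^ (1 / p2))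
    ∧ ((∫⁻ x2 in Ioi (0 : ℝ), (∫⁻ x1 in Ioi (0 : ℝ),
          (∫⁻ t2 in Ioi (0 : ℝ), ∫⁻ t1 in Ioi (0 : ℝ),
              k1 x1 t1 * k2 x2 t2 * f (t1, t2)) ^ r1) ^ (r2 / r1)) ^ (1 / r2)
        ≤ (∫⁻ x1 in Ioi (0 : ℝ), (∫⁻ x2 in Ioi (0 : ℝ),
          (∫⁻ t2 in Ioi (0 : ℝ), ∫⁻ t1 in Ioi (0 : ℝ),
              k1 x1 t1 * k2 x2 t2 * f (t1, t2)) ^ r2) ^ (r1 / r2)) ^ (1 / r1)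
      ∧ (∫⁻ x1 in Ioi (0 : ℝ), (∫⁻ x2 in Ioi (0 : ℝ),
          (∫⁻ t2 in Ioi (0 : ℝ), ∫⁻ t1 in Ioi (0 : ℝ),
              k1 x1 t1 * k2 x2 t2 * f (t1, t2)) ^ r2) ^ (r1 / r2)) ^ (1 / r1)
        ≤ C1 * C2 * (∫⁻ t2 in Ioi (0 : ℝ),
            (∫⁻ t1 in Ioi (0 : ℝ), f (t1, t2) ^ p1) ^ (p2 / p1)) ^ (1 / p2)) := by
  have hp1 : (0:ℝ) < p1 := lt_of_lt_of_le hp2 hp21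
  have hr1p : (0:ℝ) < r1 := lt_of_lt_of_le one_pos hr1
  have hr2p : (0:ℝ) < r2 := lt_of_lt_of_le one_pos hr2
  set T : ℝ → ℝ → ℝ≥0∞ := fun x1 x2 => ∫⁻ t2 in Ioi (0 : ℝ), ∫⁻ t1 in Ioi (0 : ℝ),
      k1 x1 t1 * k2 x2 t2 * f (t1, t2) with hTdef
  -- measurability of the inner integrand families
  have hm0 : Measurable fun w : ((ℝ × ℝ) × ℝ) × ℝ =>
      k1 w.1.1.1 w.2 * k2 w.1.1.2 w.1.2 * f (w.2, w.1.2) := by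
    apply Measurable.mul
    apply Measurable.mul
    · exact hk1.comp ((measurable_fst.comp measurable_fst |>.comp measurable_fst).prodMk
        measurable_snd)
    · exact hk2.comp ((measurable_snd.comp measurable_fst |>.comp measurable_fst).prodMk
        (measurable_snd.comp measurable_fst))
    · exact hf.comp (measurable_snd.prodMk (measurable_snd.comp measurable_fst))
  have hm1 : Measurable fun z : (ℝ × ℝ) × ℝ => ∫⁻ t1 in Ioi (0 : ℝ),
      k1 z.1.1 t1 * k2 z.1.2 z.2 * f (t1, z.2) :=
    Measurable.lintegral_prod_right
      (f := fun (z : (ℝ × ℝ) × ℝ) (t1 : ℝ) => k1 z.1.1 t1 * k2 z.1.2 z.2 * f (t1, z.2)) hm0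
  have hT : Measurable (Function.uncurry T) :=
    Measurable.lintegral_prod_right
      (f := fun (z : ℝ × ℝ) (t2 : ℝ) => ∫⁻ t1 in Ioi (0 : ℝ),
        k1 z.1 t1 * k2 z.2 t2 * f (t1, t2)) hm1
  set ψ : ℝ → ℝ≥0∞ := fun t1 => (∫⁻ t2 in Ioi (0 : ℝ), f (t1, t2) ^ p2) ^ (1 / p2) with hψdef
  have hψmeas : Measurable ψ :=
    (Measurable.lintegral_prod_right (f := fun t1 t2 => f (t1, t2) ^ p2)
      (hf.ennrpow_const p2)).ennrpow_const (1 / p2)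
  have hTeq : ∀ x1 x2, T x1 x2 = ∫⁻ t1 in Ioi (0 : ℝ),
      k1 x1 t1 * ∫⁻ t2 in Ioi (0 : ℝ), k2 x2 t2 * f (t1, t2) := by
    intro x1 x2
    rw [hTdef]
    dsimp only
    rw [lintegral_lintegral_swap (f := fun t2 t1 => k1 x1 t1 * k2 x2 t2 * f (t1, t2))
      (((hk1.comp (measurable_const.prodMk measurable_snd)).mul
        (hk2.comp (measurable_const.prodMk measurable_fst))).mul
        (hf.comp (measurable_snd.prodMk measurable_fst))).aemeasurable]
    refine lintegral_congr fun t1 => ?_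
    have hmeas : Measurable fun t2 => k2 x2 t2 * f (t1, t2) :=
      (hk2.comp (measurable_const.prodMk measurable_id)).mul
        (hf.comp (measurable_const.prodMk measurable_id))
    rw [← lintegral_const_mul (k1 x1 t1) hmeas]
    exact lintegral_congr fun t2 => by ring
  have stepA : ∀ x1, (∫⁻ x2 in Ioi (0 : ℝ), T x1 x2 ^ r2) ^ (1 / r2)
      ≤ C2 * ∫⁻ t1 in Ioi (0 : ℝ), k1 x1 t1 * ψ t1 := by
    intro x1
    simp_rw [hTeq x1]
    have hGfull : Measurable (Function.uncurry fun (t1 x2 : ℝ) =>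
        k1 x1 t1 * ∫⁻ t2 in Ioi (0 : ℝ), k2 x2 t2 * f (t1, t2)) := by
      apply Measurable.mul
      · exact hk1.comp (measurable_const.prodMk measurable_fst)
      · exact Measurable.lintegral_prod_right
          (f := fun (z : ℝ × ℝ) (t2 : ℝ) => k2 z.2 t2 * f (z.1, t2))
          ((hk2.comp ((measurable_snd.comp measurable_fst).prodMk measurable_snd)).mul
            (hf.comp ((measurable_fst.comp measurable_fst).prodMk measurable_snd)))
    have mink := lintegral_minkowski (volume.restrict (Ioi (0 : ℝ)))
      (volume.restrict (Ioi (0 : ℝ)))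
      (g := fun t1 x2 => k1 x1 t1 * ∫⁻ t2 in Ioi (0 : ℝ), k2 x2 t2 * f (t1, t2)) hGfull hr2
    have step : ∫⁻ t1 in Ioi (0 : ℝ), (∫⁻ x2 in Ioi (0 : ℝ),
        (k1 x1 t1 * ∫⁻ t2 in Ioi (0 : ℝ), k2 x2 t2 * f (t1, t2)) ^ r2) ^ (1 / r2)
        ≤ C2 * ∫⁻ t1 in Ioi (0 : ℝ), k1 x1 t1 * ψ t1 := ?_
    · exact le_trans mink step
    have hmeas2 : Measurable fun t1 => k1 x1 t1 * ψ t1 :=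
      (hk1.comp (measurable_const.prodMk measurable_id)).mul hψmeas
    rw [← lintegral_const_mul C2 hmeas2]
    apply lintegral_mono
    intro t1
    have hGx : Measurable fun x2 => ∫⁻ t2 in Ioi (0 : ℝ), k2 x2 t2 * f (t1, t2) :=
      Measurable.lintegral_prod_right (f := fun x2 t2 => k2 x2 t2 * f (t1, t2))
        (hk2.mul (hf.comp (measurable_const.prodMk measurable_snd)))
    calc (∫⁻ x2 in Ioi (0 : ℝ),
            (k1 x1 t1 * ∫⁻ t2 in Ioi (0 : ℝ), k2 x2 t2 * f (t1, t2)) ^ r2) ^ (1 / r2)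
        = (k1 x1 t1 ^ r2 * ∫⁻ x2 in Ioi (0 : ℝ),
            (∫⁻ t2 in Ioi (0 : ℝ), k2 x2 t2 * f (t1, t2)) ^ r2) ^ (1 / r2) := by
          simp_rw [ENNReal.mul_rpow_of_nonneg _ _ hr2p.le]
          rw [lintegral_const_mul _ (hGx.ennrpow_const r2)]
      _ = k1 x1 t1 * (∫⁻ x2 in Ioi (0 : ℝ),
            (∫⁻ t2 in Ioi (0 : ℝ), k2 x2 t2 * f (t1, t2)) ^ r2) ^ (1 / r2) := by
          rw [ENNReal.mul_rpow_of_nonneg _ _ (by positivity : (0:ℝ) ≤ 1 / r2),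
            ← ENNReal.rpow_mul, mul_one_div_cancel hr2p.ne', ENNReal.rpow_one]
      _ ≤ k1 x1 t1 * (C2 * ψ t1) := by
          exact mul_le_mul_right (hK2 (fun t2 => f (t1, t2))
            (hf.comp (measurable_const.prodMk measurable_id))) _
      _ = C2 * (k1 x1 t1 * ψ t1) := by ring
  have core : (∫⁻ x1 in Ioi (0 : ℝ),
        (∫⁻ x2 in Ioi (0 : ℝ), T x1 x2 ^ r2) ^ (r1 / r2)) ^ (1 / r1)
      ≤ C1 * C2 * (∫⁻ t1 in Ioi (0 : ℝ),
          (∫⁻ t2 in Ioi (0 : ℝ), f (t1, t2) ^ p2) ^ (p1 / p2)) ^ (1 / p1) := by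
    have h1 : ∀ x1, (∫⁻ x2 in Ioi (0 : ℝ), T x1 x2 ^ r2) ^ (r1 / r2)
        ≤ (C2 * ∫⁻ t1 in Ioi (0 : ℝ), k1 x1 t1 * ψ t1) ^ r1 := by
      intro x1
      have e : (∫⁻ x2 in Ioi (0 : ℝ), T x1 x2 ^ r2) ^ (r1 / r2)
          = ((∫⁻ x2 in Ioi (0 : ℝ), T x1 x2 ^ r2) ^ (1 / r2)) ^ r1 := by
        rw [← ENNReal.rpow_mul, one_div_mul_eq_div]
      rw [e]
      exact ENNReal.rpow_le_rpow (stepA x1) hr1p.le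
    have hmeas' : Measurable fun x1 => (∫⁻ t1 in Ioi (0 : ℝ), k1 x1 t1 * ψ t1) ^ r1 :=
      (Measurable.lintegral_prod_right (f := fun x1 t1 => k1 x1 t1 * ψ t1)
        (hk1.mul (hψmeas.comp measurable_snd))).ennrpow_const r1
    calc (∫⁻ x1 in Ioi (0 : ℝ),
            (∫⁻ x2 in Ioi (0 : ℝ), T x1 x2 ^ r2) ^ (r1 / r2)) ^ (1 / r1)
        ≤ (∫⁻ x1 in Ioi (0 : ℝ),
            (C2 * ∫⁻ t1 in Ioi (0 : ℝ), k1 x1 t1 * ψ t1) ^ r1) ^ (1 / r1) :=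
          ENNReal.rpow_le_rpow (lintegral_mono h1) (by positivity)
      _ = C2 * (∫⁻ x1 in Ioi (0 : ℝ),
            (∫⁻ t1 in Ioi (0 : ℝ), k1 x1 t1 * ψ t1) ^ r1) ^ (1 / r1) := by
          simp_rw [ENNReal.mul_rpow_of_nonneg _ _ hr1p.le]
          rw [lintegral_const_mul _ hmeas',
            ENNReal.mul_rpow_of_nonneg _ _ (by positivity : (0:ℝ) ≤ 1 / r1),
            ← ENNReal.rpow_mul, mul_one_div_cancel hr1p.ne', ENNReal.rpow_one]
      _ ≤ C2 * (C1 * (∫⁻ t1 in Ioi (0 : ℝ), ψ t1 ^ p1) ^ (1 / p1)) :=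
          mul_le_mul_right (hK1 ψ hψmeas) _
      _ = C1 * C2 * (∫⁻ t1 in Ioi (0 : ℝ),
            (∫⁻ t2 in Ioi (0 : ℝ), f (t1, t2) ^ p2) ^ (p1 / p2)) ^ (1 / p1) := by
          have e2 : ∀ t1, ψ t1 ^ p1
              = (∫⁻ t2 in Ioi (0 : ℝ), f (t1, t2) ^ p2) ^ (p1 / p2) := by
            intro t1
            rw [hψdef]
            dsimp only
            rw [← ENNReal.rpow_mul, one_div_mul_eq_div]
          simp_rw [e2]
          ring
  have fswap := lintegral_minkowski_rpow (volume.restrict (Ioi (0 : ℝ)))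
    (volume.restrict (Ioi (0 : ℝ))) (g := fun t2 t1 => f (t1, t2))
    (hf.comp measurable_swap) hp2 hp21
  have Kswap := lintegral_minkowski_rpow (volume.restrict (Ioi (0 : ℝ)))
    (volume.restrict (Ioi (0 : ℝ))) (g := T) hT hr1p hr12
  exact ⟨⟨Kswap.trans core, mul_le_mul_right fswap (C1 * C2)⟩,
    ⟨Kswap, core.trans (mul_le_mul_right fswap (C1 * C2))⟩⟩
end
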